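/- Let n ≥ 1 be a natural number and let φ be a permutation of Fin n × Fin 2. Then orb(φ) + orb(φ ∘ σ) ≤ n + 2·c, where c is the number of orbits of the action on Fin n × Fin 2 of the subgroup of the permutation group generated by φ and σ. -/

import Mathlib

/-- The number of orbits (cycles, including fixed points) of a permutation `f`
of a finite type `α`: the number of equivalence classes of the relation
`∃ k : ℤ, (f ^ k) x = y`. -/
noncomputable def orb {α : Type*} [Fintype α] (f : Equiv.Perm α) : ℕ :=
  Nat.card (Quotient (Equiv.Perm.SameCycle.setoid f))

/-- The permutation `σ` of `Fin n × Fin 2` given by `σ (i, j) = (i, j + 1)`. -/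
def sigmaPerm (n : ℕ) : Equiv.Perm (Fin n × Fin 2) :=
  Equiv.prodCongr (Equiv.refl (Fin n)) (Equiv.addRight (1 : Fin 2))

open Equiv Equiv.Perm MulAction Subgroup

/-! ### Counting lemmas for quotients of setoids -/

section Counting
variable {γ : Type*} [Finite γ]

private lemma card_quot_le_of_imp {s t : Setoid γ} (h : ∀ p q, s p q → t p q) :
    Nat.card (Quotient t) ≤ Nat.card (Quotient s) := by
  apply Nat.card_le_card_of_surjective (Quotient.map' id (fun p q hpq => h p q hpq))
  intro c
  induction c using Quotient.inductionOn' with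
  | h p => exact ⟨Quotient.mk'' p, rfl⟩

private lemma card_subtype_ne {C : Type*} [Finite C] (x : C) :
    Nat.card {c : C // c ≠ x} = Nat.card C - 1 := by
  classical
  have : Fintype C := Fintype.ofFinite C
  simp only [Nat.card_eq_fintype_card, ne_eq]
  rw [Fintype.card_subtype_compl (· = x), Fintype.card_subtype_eq]

/-- Coarsening a setoid merging only the classes of `a` and `b` loses at most one class. -/
private lemma card_quot_le_add_one {s t : Setoid γ} {a b : γ}
    (h : ∀ p q, s p q → t p q)
    (tri : ∀ p q, t p q → s p q ∨ (s p a ∧ s b q) ∨ (s p b ∧ s a q)) :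
    Nat.card (Quotient s) ≤ Nat.card (Quotient t) + 1 := by
  classical
  set F : Quotient s → Quotient t := Quotient.map' id (fun p q hpq => h p q hpq) with hF
  have key : ∀ (c₁ c₂ : Quotient s), c₁ ≠ Quotient.mk s b → c₂ ≠ Quotient.mk s b →
      F c₁ = F c₂ → c₁ = c₂ := by
    intro c₁ c₂ h₁ h₂ hef
    induction c₁ using Quotient.inductionOn' with
    | h p =>
    induction c₂ using Quotient.inductionOn' with
    | h q =>
    have htpq : t p q := Quotient.exact' hef
    rcases tri p q htpq with h0 | ⟨hpa, hbq⟩ | ⟨hpb, haq⟩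
    · exact Quotient.sound' h0
    · exact absurd (Quotient.sound' (s.symm hbq) : Quotient.mk'' q = _) h₂
    · exact absurd (Quotient.sound' hpb : Quotient.mk'' p = _) h₁
  have hinj : Function.Injective (fun c : {c : Quotient s // c ≠ Quotient.mk s b} => F c.val) := by
    intro c₁ c₂ hc
    exact Subtype.ext (key c₁.val c₂.val c₁.prop c₂.prop hc)
  have := Nat.card_le_card_of_injective _ hinj
  rw [card_subtype_ne] at this
  omega

/-- Refining a setoid, separating the (previously equal) classes of `a` and `b`,
yields at least one extra class. -/
private lemma card_quot_add_one_le {s t : Setoid γ} {a b : γ}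
    (h : ∀ p q, s p q → t p q) (htab : t a b) (hsab : ¬ s a b) :
    Nat.card (Quotient t) + 1 ≤ Nat.card (Quotient s) := by
  classical
  set F : Quotient s → Quotient t := Quotient.map' id (fun p q hpq => h p q hpq) with hF
  have hsurj : Function.Surjective
      (fun c : {c : Quotient s // c ≠ Quotient.mk s a} => F c.val) := by
    intro d
    induction d using Quotient.inductionOn' with
    | h p =>
    by_cases hpa : s p a
    · refine ⟨⟨Quotient.mk s b, ?_⟩, ?_⟩
      · intro hc
        exact hsab (s.symm (Quotient.exact hc))
      · show Quotient.mk'' b = Quotient.mk'' p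
        exact Quotient.sound' (t.symm ((t.trans (h p a hpa) htab)))
    · exact ⟨⟨Quotient.mk s p, fun hc => hpa (Quotient.exact hc)⟩, rfl⟩
  have := Nat.card_le_card_of_surjective _ hsurj
  rw [card_subtype_ne] at this
  have hpos : 0 < Nat.card (Quotient s) := Nat.card_pos_iff.mpr ⟨⟨Quotient.mk s a⟩, inferInstance⟩
  omega

end Counting

/-! ### The orbit setoid of a set of permutations -/

section Orel
set_option linter.unusedSectionVars false
variable {α : Type*} [Fintype α] [DecidableEq α]

/-- The orbit setoid of the subgroup generated by a set of permutations. -/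
private def orel (T : Set (Perm α)) : Setoid α := orbitRel (closure T) α

private lemma orel_rel {T : Set (Perm α)} {g : Perm α} (hg : g ∈ closure T) (p : α) :
    orel T p (g p) := by
  show p ∈ orbit (↥(closure T)) (g p)
  exact ⟨⟨g⁻¹, inv_mem hg⟩, by simp [Subgroup.smul_def, Perm.smul_def]⟩

private lemma orel_of_sameCycle {T : Set (Perm α)} {g : Perm α} (hg : g ∈ closure T)
    {p q : α} (h : g.SameCycle p q) : orel T p q := by
  obtain ⟨k, hk⟩ := h
  have := orel_rel (zpow_mem hg k) p
  rwa [hk] at this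

private lemma orel_mono {T T' : Set (Perm α)} (hT : T ⊆ T') {p q : α} (h : orel T p q) :
    orel T' p q := by
  obtain ⟨u, hu⟩ := h
  exact ⟨⟨u.val, closure_mono hT u.prop⟩, hu⟩

private lemma sameCycle_iff_orel_single {f : Perm α} {p q : α} :
    f.SameCycle p q ↔ orel {f} p q := by
  constructor
  · rintro ⟨k, hk⟩
    have := orel_rel (T := {f}) (zpow_mem (subset_closure (Set.mem_singleton f)) k) p
    rwa [hk] at this
  · rintro ⟨u, hu⟩
    have hu' : u.val ∈ zpowers f := by
      rw [zpowers_eq_closure]; exact u.prop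
    obtain ⟨k, hk⟩ := mem_zpowers_iff.mp hu'
    have : u.val q = p := hu
    refine Perm.SameCycle.symm ⟨k, ?_⟩
    rw [hk]; exact this

private lemma orb_eq_card_orel {f : Perm α} : orb f = Nat.card (Quotient (orel {f})) := by
  have : Perm.SameCycle.setoid f = orel {f} :=
    Setoid.ext fun p q => sameCycle_iff_orel_single
  rw [orb, this]

/-- Adding a transposition `swap a b` to a generating set merges at most
the orbits of `a` and of `b`. -/
private lemma orel_insert_swap {T : Set (Perm α)} {a b : α} {p q : α}
    (h : orel (insert (Equiv.swap a b) T) p q) :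
    orel T p q ∨ (orel T p a ∧ orel T b q) ∨ (orel T p b ∧ orel T a q) := by
  set o := orel T with ho
  set R : α → α → Prop := fun p q => o p q ∨ (o p a ∧ o b q) ∨ (o p b ∧ o a q) with hR
  have otr : ∀ {u v w}, o u v → o v w → o u w := fun h g => o.trans h g
  have osy : ∀ {u v}, o u v → o v u := fun h => o.symm h
  have hrefl : ∀ p, R p p := fun p => Or.inl (o.refl p)
  have hsymm : ∀ {p q}, R p q → R q p := by
    rintro p q (h0 | ⟨h1, h2⟩ | ⟨h1, h2⟩)
    · exact Or.inl (osy h0)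
    · exact Or.inr (Or.inr ⟨osy h2, osy h1⟩)
    · exact Or.inr (Or.inl ⟨osy h2, osy h1⟩)
  have htrans : ∀ {p q r}, R p q → R q r → R p r := by
    rintro p q r (h0 | ⟨h1, h2⟩ | ⟨h1, h2⟩) (g0 | ⟨g1, g2⟩ | ⟨g1, g2⟩)
    · exact Or.inl (otr h0 g0)
    · exact Or.inr (Or.inl ⟨otr h0 g1, g2⟩)
    · exact Or.inr (Or.inr ⟨otr h0 g1, g2⟩)
    · exact Or.inr (Or.inl ⟨h1, otr h2 g0⟩)
    · exact Or.inl (otr h1 (otr (osy (otr h2 g1)) g2))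
    · exact Or.inl (otr h1 g2)
    · exact Or.inr (Or.inr ⟨h1, otr h2 g0⟩)
    · exact Or.inl (otr h1 g2)
    · exact Or.inl (otr h1 (otr (osy (otr h2 g1)) g2))
  have main : ∀ (g : Perm α), g ∈ closure (insert (Equiv.swap a b) T) → ∀ p, R p (g p) := by
    intro g hg
    induction hg using closure_induction with
    | mem x hx =>
      intro p
      rcases Set.mem_insert_iff.mp hx with hx | hx
      · subst hx
        by_cases hpa : p = a
        · rw [hpa, Equiv.swap_apply_left]
          exact Or.inr (Or.inl ⟨o.refl a, o.refl b⟩)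
        by_cases hpb : p = b
        · rw [hpb, Equiv.swap_apply_right]
          exact Or.inr (Or.inr ⟨o.refl b, o.refl a⟩)
        · rw [Equiv.swap_apply_of_ne_of_ne hpa hpb]
          exact hrefl p
      · exact Or.inl (orel_of_sameCycle (subset_closure hx) ⟨1, by simp⟩)
    | one => intro p; simpa using hrefl p
    | mul u v hu hv hRu hRv =>
      intro p
      have h1 := hRv p
      have h2 := hRu (v p)
      simpa using htrans h1 h2
    | inv u hu hRu =>
      intro p
      have := hRu (u⁻¹ p)
      simp only [Perm.coe_inv, Equiv.apply_symm_apply] at this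
      exact hsymm this
  obtain ⟨u, hu⟩ := h
  have := main u.val u.prop q
  rw [show u.val q = p from hu] at this
  exact hsymm this

private lemma orel_insert_eq {T : Set (Perm α)} {a b : α} (hab : orel T a b) :
    orel (insert (Equiv.swap a b) T) = orel T := by
  apply Setoid.ext; intro p q
  constructor
  · intro h
    rcases orel_insert_swap h with h0 | ⟨h1, h2⟩ | ⟨h1, h2⟩
    · exact h0
    · exact (orel T).trans h1 ((orel T).trans hab h2)
    · exact (orel T).trans h1 ((orel T).trans ((orel T).symm hab) h2)
  · exact fun h => orel_mono (Set.subset_insert _ _) h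

private lemma comp_le_insert_add_one (T : Set (Perm α)) (a b : α) :
    Nat.card (Quotient (orel T)) ≤
      Nat.card (Quotient (orel (insert (Equiv.swap a b) T))) + 1 :=
  card_quot_le_add_one (fun p q h => orel_mono (Set.subset_insert _ _) h)
    (fun p q h => orel_insert_swap h)

private lemma comp_congr {T T' : Set (Perm α)} (h : closure T = closure T') :
    Nat.card (Quotient (orel T)) = Nat.card (Quotient (orel T')) := by
  unfold orel
  rw [h]

end Orel

/-! ### Splitting and merging cycles with a transposition -/

section PermFacts
variable {α : Type*} [Fintype α] [DecidableEq α]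

private lemma not_sameCycle_of_fixed {g : Perm α} {a b : α} (h : g a = a) (hab : a ≠ b) :
    ¬ g.SameCycle a b := by
  rintro ⟨k, hk⟩
  rw [Perm.zpow_apply_eq_self_of_apply_eq_self h k] at hk
  exact hab hk

/-- Multiplying on the right by `swap a b` splits the common cycle of `a` and `b`. -/
private lemma not_sameCycle_mul_swap {x : Perm α} {a b : α} (hab : a ≠ b)
    (h : x.SameCycle a b) : ¬ (x * Equiv.swap a b).SameCycle a b := by
  classical
  have hP : ∃ i, 0 < i ∧ (x ^ i) a = b := by
    obtain ⟨i, hi1, _, hi3⟩ := h.exists_pow_eq''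
    exact ⟨i, hi1, hi3⟩
  set k := Nat.find hP with hkdef
  obtain ⟨hkpos, hkb⟩ : 0 < k ∧ (x ^ k) a = b := Nat.find_spec hP
  have hmin : ∀ i, 0 < i → i < k → (x ^ i) a ≠ b := by
    intro i hi hik heq
    exact Nat.find_min hP hik ⟨hi, heq⟩
  have hne_a : ∀ i, 0 < i → i < k → (x ^ i) a ≠ a := by
    intro i hi hik heq
    apply hmin (k - i) (by omega) (by omega)
    rw [← heq, ← Perm.mul_apply, ← pow_add, Nat.sub_add_cancel (by omega)]
    exact hkb
  set g := x * Equiv.swap a b with hg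
  set S : Set α := {p | p = b ∨ ∃ i, 0 < i ∧ i < k ∧ (x ^ i) a = p} with hS
  have haS : a ∉ S := by
    rintro (rfl | ⟨i, hi, hik, heq⟩)
    · exact hab rfl
    · exact hne_a i hi hik heq
  have hgS : ∀ p ∈ S, g p ∈ S := by
    rintro p (hp | ⟨i, hi, hik, rfl⟩)
    · rw [hp]
      have : g b = x a := by
        rw [hg, Perm.mul_apply, Equiv.swap_apply_right]
      rw [this]
      rcases eq_or_lt_of_le (Nat.one_le_iff_ne_zero.mpr hkpos.ne') with h1 | h1
      · left; rw [← hkb, ← h1, pow_one]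
      · right; exact ⟨1, one_pos, h1, (pow_one x).symm ▸ rfl⟩
    · have hpa : (x ^ i) a ≠ a := hne_a i hi hik
      have hpb : (x ^ i) a ≠ b := hmin i hi hik
      have : g ((x ^ i) a) = (x ^ (i + 1)) a := by
        rw [hg, Perm.mul_apply, Equiv.swap_apply_of_ne_of_ne hpa hpb, pow_succ',
          Perm.mul_apply]
      rw [this]
      rcases eq_or_lt_of_le (Nat.succ_le_of_lt hik) with h1 | h1
      · left; rw [show i + 1 = k from h1]; exact hkb
      · right; exact ⟨i + 1, Nat.succ_pos i, h1, rfl⟩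
  have hpow : ∀ m : ℕ, (g ^ m) b ∈ S := by
    intro m
    induction m with
    | zero => exact Or.inl rfl
    | succ m ih =>
      rw [pow_succ', Perm.mul_apply]
      exact hgS _ ih
  intro hsc
  obtain ⟨i, _, hi⟩ := hsc.symm.exists_pow_eq'
  exact haS (hi ▸ hpow i)

/-- Multiplying on the right by `swap a b` merges the distinct cycles of `a` and `b`. -/
private lemma sameCycle_mul_swap_of_not {x : Perm α} {a b : α}
    (h : ¬ x.SameCycle a b) : (x * Equiv.swap a b).SameCycle a b := by
  classical
  have hab : a ≠ b := fun he => h (he ▸ Perm.SameCycle.refl x a)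
  have hP : ∃ i, 0 < i ∧ (x ^ i) b = b :=
    ⟨orderOf x, orderOf_pos x, by rw [pow_orderOf_eq_one]; rfl⟩
  set p := Nat.find hP with hpdef
  obtain ⟨hppos, hpb⟩ : 0 < p ∧ (x ^ p) b = b := Nat.find_spec hP
  have hmin : ∀ i, 0 < i → i < p → (x ^ i) b ≠ b := by
    intro i hi hip heq
    exact Nat.find_min hP hip ⟨hi, heq⟩
  have hne_a : ∀ i : ℕ, (x ^ i) b ≠ a := by
    intro i heq
    exact h (Perm.SameCycle.symm ⟨(i : ℤ), by rw [zpow_natCast]; exact heq⟩)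
  set g := x * Equiv.swap a b with hg
  have claim : ∀ j, j < p → (g ^ (j + 1)) a = (x ^ (j + 1)) b := by
    intro j
    induction j with
    | zero =>
      intro _
      rw [pow_one, pow_one, hg, Perm.mul_apply, Equiv.swap_apply_left]
    | succ j ih =>
      intro hjp
      have hj : j < p := by omega
      have h1 : (x ^ (j + 1)) b ≠ a := hne_a (j + 1)
      have h2 : (x ^ (j + 1)) b ≠ b := hmin (j + 1) (Nat.succ_pos j) hjp
      rw [pow_succ' g, Perm.mul_apply, ih hj, hg, Perm.mul_apply,
        Equiv.swap_apply_of_ne_of_ne h1 h2, ← Perm.mul_apply, ← pow_succ']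
  have : (g ^ p) a = b := by
    have := claim (p - 1) (by omega)
    rwa [Nat.sub_add_cancel (by omega), hpb] at this
  exact ⟨(p : ℤ), by rw [zpow_natCast]; exact this⟩

end PermFacts

/-! ### Cycle-count inequalities -/

section OrbIneq
set_option linter.unusedSectionVars false
variable {α : Type*} [Fintype α] [DecidableEq α]

private lemma orb_le_add_one {f g : Perm α} {a b : α}
    (hg : g ∈ closure (insert (Equiv.swap a b) {f})) : orb f ≤ orb g + 1 := by
  have h1 : Nat.card (Quotient (orel (insert (Equiv.swap a b) {f}))) ≤ orb g := by
    rw [orb]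
    exact card_quot_le_of_imp (s := Perm.SameCycle.setoid g)
      (fun p q hpq => orel_of_sameCycle hg hpq)
  have h2 := comp_le_insert_add_one ({f} : Set (Perm α)) a b
  rw [orb_eq_card_orel]
  omega

private lemma orb_add_one_le {f g : Perm α} {a b : α}
    (hg : g ∈ closure (insert (Equiv.swap a b) {f}))
    (hf : f.SameCycle a b) (hng : ¬ g.SameCycle a b) : orb f + 1 ≤ orb g := by
  have hOab : orel ({f} : Set (Perm α)) a b := sameCycle_iff_orel_single.mp hf
  have href : ∀ p q : α, g.SameCycle p q → f.SameCycle p q := by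
    intro p q hpq
    rcases orel_insert_swap (orel_of_sameCycle hg hpq) with h0 | ⟨h1, h2⟩ | ⟨h1, h2⟩
    · exact sameCycle_iff_orel_single.mpr h0
    · exact sameCycle_iff_orel_single.mpr
        ((orel {f}).trans h1 ((orel {f}).trans hOab h2))
    · exact sameCycle_iff_orel_single.mpr
        ((orel {f}).trans h1 ((orel {f}).trans ((orel {f}).symm hOab) h2))
  exact card_quot_add_one_le (s := Perm.SameCycle.setoid g) (t := Perm.SameCycle.setoid f)
    href hf hng

private lemma orb_one : orb (1 : Perm α) = Fintype.card α := by
  have hbij : Function.Bijective (Quotient.mk (Perm.SameCycle.setoid (1 : Perm α))) := by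
    constructor
    · intro p q h
      exact Perm.sameCycle_one.mp (Quotient.exact h)
    · exact fun c => Quotient.exists_rep c
  rw [orb, ← Nat.card_eq_fintype_card]
  exact (Nat.card_eq_of_bijective _ hbij).symm

private lemma closure_pair_one (x : Perm α) :
    closure ({x, (1 : Perm α)} : Set (Perm α)) = closure {x} := by
  apply le_antisymm
  · rw [closure_le]
    rintro g hg
    rcases Set.mem_insert_iff.mp hg with rfl | hg
    · exact subset_closure (Set.mem_singleton g)
    · rw [Set.mem_singleton_iff.mp hg]
      exact one_mem _
  · rw [closure_le]
    rintro g hg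
    rw [Set.mem_singleton_iff.mp hg]
    exact subset_closure (Set.mem_insert x _)

private lemma closure_step (x y : Perm α) (a b : α) :
    closure (insert (Equiv.swap a b) ({x, y} : Set (Perm α))) =
      closure (insert (Equiv.swap a b)
        ({x * Equiv.swap a b, Equiv.swap a b * y} : Set (Perm α))) := by
  set τ := Equiv.swap a b with hτdef
  have hτL : τ ∈ closure (insert τ ({x, y} : Set (Perm α))) :=
    subset_closure (Set.mem_insert _ _)
  have hxL : x ∈ closure (insert τ ({x, y} : Set (Perm α))) :=
    subset_closure (Set.mem_insert_of_mem _ (Set.mem_insert _ _))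
  have hyL : y ∈ closure (insert τ ({x, y} : Set (Perm α))) :=
    subset_closure (Set.mem_insert_of_mem _ (Set.mem_insert_of_mem _ rfl))
  have hτR : τ ∈ closure (insert τ ({x * τ, τ * y} : Set (Perm α))) :=
    subset_closure (Set.mem_insert _ _)
  have hxR : x * τ ∈ closure (insert τ ({x * τ, τ * y} : Set (Perm α))) :=
    subset_closure (Set.mem_insert_of_mem _ (Set.mem_insert _ _))
  have hyR : τ * y ∈ closure (insert τ ({x * τ, τ * y} : Set (Perm α))) :=
    subset_closure (Set.mem_insert_of_mem _ (Set.mem_insert_of_mem _ rfl))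
  have hx' : x * τ * τ = x := by rw [mul_assoc, hτdef, swap_mul_self, mul_one]
  have hy' : τ * (τ * y) = y := by rw [← mul_assoc, hτdef, swap_mul_self, one_mul]
  apply le_antisymm <;> rw [closure_le] <;> intro g hg <;>
    simp only [Set.mem_insert_iff, Set.mem_singleton_iff] at hg <;>
    rcases hg with rfl | rfl | rfl
  · exact hτR
  · have h := mul_mem hxR hτR
    rwa [hx'] at h
  · have h := mul_mem hτR hyR
    rwa [hy'] at h
  · exact hτL
  · exact mul_mem hxL hτL
  · exact mul_mem hτL hyL

end OrbIneq
/-! ### The main inequality -/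

section Key
set_option linter.unusedSectionVars false
variable {α : Type*} [Fintype α] [DecidableEq α]

private lemma key_base (x : Perm α) :
    orb x + orb (1 : Perm α) + orb (x * 1) ≤
      Fintype.card α + 2 * Nat.card (Quotient (orel ({x, (1 : Perm α)} : Set (Perm α)))) := by
  rw [mul_one, orb_one]
  have h2 : Nat.card (Quotient (orel ({x, (1 : Perm α)} : Set (Perm α)))) = orb x := by
    rw [comp_congr (closure_pair_one x), ← orb_eq_card_orel]
  omega

private lemma key : ∀ (N : ℕ) (x y : Perm α), y.support.card ≤ N →
    orb x + orb y + orb (x * y) ≤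
      Fintype.card α + 2 * Nat.card (Quotient (orel ({x, y} : Set (Perm α)))) := by
  intro N
  induction N with
  | zero =>
    intro x y hy
    have : y = 1 := by
      rw [← Perm.support_eq_empty_iff]
      exact Finset.card_eq_zero.mp (Nat.le_zero.mp hy)
    subst this
    exact key_base x
  | succ N ih =>
    intro x y hy
    by_cases h1 : y = 1
    · subst h1; exact key_base x
    · -- pick a point moved by y
      have hne : y.support.Nonempty :=
        Finset.nonempty_iff_ne_empty.mpr (fun h => h1 (Perm.support_eq_empty_iff.mp h))
      obtain ⟨a, ha⟩ := hne
      set b := y a with hbdef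
      have hab : a ≠ b := fun h => (Perm.mem_support.mp ha) h.symm
      set τ := Equiv.swap a b with hτdef
      set x' := x * τ with hx'def
      set y' := τ * y with hy'def
      have hprod : x' * y' = x * y := by
        rw [hx'def, hy'def, mul_assoc, ← mul_assoc τ, hτdef, swap_mul_self, one_mul]
      -- support decreases
      have hbsup : b ∈ y.support := by
        rw [Perm.mem_support]
        intro hb
        exact hab (y.injective (hbdef ▸ hb : y b = y a)).symm
      have hsub : y'.support ⊆ y.support := by
        intro p hp
        by_contra hps
        have hyp : y p = p := Perm.notMem_support.mp hps
        have hpa : p ≠ a := fun h => hps (h ▸ ha)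
        have hpb : p ≠ b := fun h => hps (h ▸ hbsup)
        have : y' p = p := by
          rw [hy'def, Perm.mul_apply, hyp, hτdef, Equiv.swap_apply_of_ne_of_ne hpa hpb]
        exact (Perm.mem_support.mp hp) this
      have hanot : a ∉ y'.support := by
        rw [Perm.notMem_support, hy'def, Perm.mul_apply, ← hbdef, hτdef,
          Equiv.swap_apply_right]
      have hcard : y'.support.card ≤ N := by
        have hss : y'.support ⊂ y.support := ⟨hsub, fun hall => hanot (hall ha)⟩
        have := Finset.card_lt_card hss
        omega
      -- y gains a cycle
      have hy'mem : y' ∈ closure (insert τ ({y} : Set (Perm α))) :=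
        mul_mem (subset_closure (Set.mem_insert _ _))
          (subset_closure (Set.mem_insert_of_mem _ (Set.mem_singleton _)))
      have hscy : y.SameCycle a b := ⟨1, by rw [zpow_one, hbdef]⟩
      have horb_y : orb y + 1 ≤ orb y' := by
        refine orb_add_one_le hy'mem hscy (not_sameCycle_of_fixed ?_ hab)
        rw [hy'def, Perm.mul_apply, ← hbdef, hτdef, Equiv.swap_apply_right]
      -- components
      have horel_ab : orel ({x, y} : Set (Perm α)) a b :=
        orel_of_sameCycle (subset_closure (Set.mem_insert_of_mem _ (Set.mem_singleton _))) hscy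
      have hcomp1 : Nat.card (Quotient (orel (insert τ ({x, y} : Set (Perm α))))) =
          Nat.card (Quotient (orel ({x, y} : Set (Perm α)))) := by
        rw [hτdef, orel_insert_eq horel_ab]
      have hcomp2 : Nat.card (Quotient (orel (insert τ ({x, y} : Set (Perm α))))) =
          Nat.card (Quotient (orel (insert τ ({x', y'} : Set (Perm α))))) := by
        rw [hτdef, hx'def, hy'def]
        exact comp_congr (closure_step x y a b)
      have IH := ih x' y' hcard
      rw [hprod] at IH
      have hx'mem : x' ∈ closure (insert τ ({x} : Set (Perm α))) :=
        mul_mem (subset_closure (Set.mem_insert_of_mem _ (Set.mem_singleton _)))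
          (subset_closure (Set.mem_insert _ _))
      by_cases hA : x.SameCycle a b
      · -- x also gains a cycle, components may drop by one
        have horb_x : orb x + 1 ≤ orb x' := by
          refine orb_add_one_le hx'mem hA ?_
          rw [hx'def, hτdef]
          exact not_sameCycle_mul_swap hab hA
        have hcomp3 := comp_le_insert_add_one ({x', y'} : Set (Perm α)) a b
        rw [← hτdef] at hcomp3
        omega
      · -- x loses at most one cycle, components unchanged
        have horb_x : orb x ≤ orb x' + 1 := orb_le_add_one hx'mem
        have hscx' : x'.SameCycle a b := by
          rw [hx'def, hτdef]
          exact sameCycle_mul_swap_of_not hA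
        have horel_ab' : orel ({x', y'} : Set (Perm α)) a b :=
          orel_of_sameCycle (subset_closure (Set.mem_insert _ _)) hscx'
        have hcomp3 : Nat.card (Quotient (orel (insert τ ({x', y'} : Set (Perm α))))) =
            Nat.card (Quotient (orel ({x', y'} : Set (Perm α)))) := by
          rw [hτdef, orel_insert_eq horel_ab']
        omega

end Key
/-! ### Specializing to `Fin n × Fin 2` -/

private lemma fin2_succ_succ (v : Fin 2) : v + 1 + 1 = v := by
  have h : ∀ w : Fin 2, w + 1 + 1 = w := by decide
  exact h v

private lemma fin2_ne_add_one {u v : Fin 2} (h : u ≠ v) : u + 1 = v := by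
  have h2 : ∀ w w' : Fin 2, w ≠ w' → w + 1 = w' := by decide
  exact h2 u v h

private lemma sigma_apply {n : ℕ} (p : Fin n × Fin 2) : sigmaPerm n p = (p.1, p.2 + 1) := rfl

private lemma sigma_sq (n : ℕ) : sigmaPerm n * sigmaPerm n = 1 := by
  apply Equiv.ext
  intro p
  rw [Perm.mul_apply, sigma_apply, sigma_apply]
  show (p.1, p.2 + 1 + 1) = p
  rw [fin2_succ_succ]

private lemma orb_sigma (n : ℕ) : orb (sigmaPerm n) = n := by
  have hfst : ∀ (m : ℕ) (p : Fin n × Fin 2), ((sigmaPerm n ^ m) p).1 = p.1 := by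
    intro m
    induction m with
    | zero => intro p; rfl
    | succ m ih =>
      intro p
      rw [pow_succ, Perm.mul_apply, ih, sigma_apply]
  have hwd : ∀ p q : Fin n × Fin 2, (sigmaPerm n).SameCycle p q → p.1 = q.1 := by
    intro p q h
    obtain ⟨i, _, hi⟩ := h.exists_pow_eq'
    rw [← hi, hfst]
  have hbij : Function.Bijective
      (Quotient.lift (fun p : Fin n × Fin 2 => p.1) (fun p q h => hwd p q h) :
        Quotient (Equiv.Perm.SameCycle.setoid (sigmaPerm n)) → Fin n) := by
    constructor
    · intro c₁ c₂
      induction c₁ using Quotient.inductionOn' with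
      | h p =>
      induction c₂ using Quotient.inductionOn' with
      | h q =>
      intro hpq
      have hpq1 : p.1 = q.1 := hpq
      apply Quotient.sound'
      show (sigmaPerm n).SameCycle p q
      by_cases h2 : p.2 = q.2
      · rw [show p = q from Prod.ext hpq1 h2]
      · refine ⟨1, ?_⟩
        rw [zpow_one, sigma_apply]
        exact Prod.ext hpq1 (fin2_ne_add_one h2)
    · intro i
      exact ⟨Quotient.mk _ (i, (0 : Fin 2)), rfl⟩
  rw [orb, Nat.card_eq_of_bijective _ hbij, Nat.card_eq_fintype_card, Fintype.card_fin]

theorem orb_add_orb_le_components (n : ℕ) (hn : 1 ≤ n)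
    (φ : Equiv.Perm (Fin n × Fin 2)) :
    orb φ + orb (φ * sigmaPerm n) ≤ n +
      2 * Nat.card (MulAction.orbitRel.Quotient
        (Subgroup.closure ({φ, sigmaPerm n} : Set (Equiv.Perm (Fin n × Fin 2))))
        (Fin n × Fin 2)) := by
  classical
  have hps : φ * sigmaPerm n * sigmaPerm n = φ := by
    rw [mul_assoc, sigma_sq, mul_one]
  have hkey := key ((sigmaPerm n).support.card) (φ * sigmaPerm n) (sigmaPerm n) le_rfl
  rw [hps] at hkey
  have hcard : Fintype.card (Fin n × Fin 2) = 2 * n := by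
    rw [Fintype.card_prod, Fintype.card_fin, Fintype.card_fin, mul_comm]
  have hsig : orb (sigmaPerm n) = n := orb_sigma n
  have hcl : closure ({φ * sigmaPerm n, sigmaPerm n} : Set (Perm (Fin n × Fin 2))) =
      closure ({φ, sigmaPerm n} : Set (Perm (Fin n × Fin 2))) := by
    have hφR : φ ∈ closure ({φ, sigmaPerm n} : Set (Perm (Fin n × Fin 2))) :=
      Subgroup.subset_closure (Set.mem_insert _ _)
    have hσR : sigmaPerm n ∈ closure ({φ, sigmaPerm n} : Set (Perm (Fin n × Fin 2))) :=
      Subgroup.subset_closure (Set.mem_insert_of_mem _ (Set.mem_singleton _))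
    have hφσL : φ * sigmaPerm n ∈
        closure ({φ * sigmaPerm n, sigmaPerm n} : Set (Perm (Fin n × Fin 2))) :=
      Subgroup.subset_closure (Set.mem_insert _ _)
    have hσL : sigmaPerm n ∈
        closure ({φ * sigmaPerm n, sigmaPerm n} : Set (Perm (Fin n × Fin 2))) :=
      Subgroup.subset_closure (Set.mem_insert_of_mem _ (Set.mem_singleton _))
    have hφL : φ ∈ closure ({φ * sigmaPerm n, sigmaPerm n} : Set (Perm (Fin n × Fin 2))) := by
      have h := mul_mem hφσL hσL
      rwa [hps] at h
    apply le_antisymm <;> rw [closure_le] <;> intro g hg <;>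
      simp only [Set.mem_insert_iff, Set.mem_singleton_iff] at hg
    · rcases hg with h | h
      · rw [h]; exact mul_mem hφR hσR
      · rw [h]; exact hσR
    · rcases hg with h | h
      · rw [h]; exact hφL
      · rw [h]; exact hσL
  have hcomp : Nat.card (Quotient (orel ({φ * sigmaPerm n, sigmaPerm n} :
      Set (Perm (Fin n × Fin 2))))) =
      Nat.card (Quotient (orel ({φ, sigmaPerm n} : Set (Perm (Fin n × Fin 2))))) :=
    comp_congr hcl
  have hQ : Nat.card (MulAction.orbitRel.Quotient
      (closure ({φ, sigmaPerm n} : Set (Perm (Fin n × Fin 2)))) (Fin n × Fin 2)) =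
      Nat.card (Quotient (orel ({φ, sigmaPerm n} : Set (Perm (Fin n × Fin 2))))) := rfl
  rw [hQ]
  omega
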